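/- Let m be an odd cube-free positive integer, i.e., m is odd and no prime cube divides m. If G is a finite group of order m, then G has a basis. -/

import Mathlib

set_option linter.unnecessarySimpa false
set_option linter.unusedVariables false

/-- A sequence `b : Fin n → G` of non-identity elements is a *basis* for the group `G`
if every `g ∈ G` is uniquely of the form `b 0 ^ a 0 * ⋯ * b (n-1) ^ a (n-1)`
with `a i ∈ {0, …, orderOf (b i) - 1}`. -/
def IsGroupBasis {G : Type*} [Group G] {n : ℕ} (b : Fin n → G) : Prop :=
  (∀ i, b i ≠ 1) ∧
    Function.Bijective (fun a : ∀ i, Fin (orderOf (b i)) =>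
      (List.ofFn fun i => b i ^ ((a i : ℕ))).prod)

/-- `G` has a basis. -/
def HasGroupBasis (G : Type*) [Group G] : Prop :=
  ∃ (n : ℕ) (b : Fin n → G), IsGroupBasis b

lemma hasGroupBasis_of_subsingleton (G : Type*) [Group G] [Subsingleton G] :
    HasGroupBasis G := by
  refine ⟨0, Fin.elim0, fun i => i.elim0, ?_, fun g => ⟨fun i => i.elim0, Subsingleton.elim _ _⟩⟩
  intro a b _
  funext i
  exact i.elim0

lemma hasGroupBasis_of_isCyclic (G : Type*) [Group G] [Finite G] (h : IsCyclic G) :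
    HasGroupBasis G := by
  rcases subsingleton_or_nontrivial G with hs | hs
  · exact hasGroupBasis_of_subsingleton G
  obtain ⟨g, hg⟩ := h.exists_generator
  have hord : orderOf g = Nat.card G := orderOf_eq_card_of_forall_mem_zpowers hg
  have hg1 : g ≠ 1 := by
    intro hgone
    have := Finite.one_lt_card_iff_nontrivial.mpr hs
    rw [← hord, hgone, orderOf_one] at this
    omega
  refine ⟨1, fun _ => g, fun _ => hg1, ?_, ?_⟩
  · intro a b hab
    simp only [List.ofFn_succ, List.ofFn_zero, List.prod_cons, List.prod_nil, mul_one] at hab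
    funext i
    have h0 : (0 : Fin 1) = i := Subsingleton.elim _ _
    rw [← h0]
    exact Fin.ext (pow_injOn_Iio_orderOf (a 0).2 (b 0).2 hab)
  · intro x
    obtain ⟨k, hk⟩ := (mem_powers_iff_mem_zpowers.mpr (hg x))
    refine ⟨fun _ => ⟨k % orderOf g, Nat.mod_lt _ (orderOf_pos g)⟩, ?_⟩
    simp only [List.ofFn_succ, List.ofFn_zero, List.prod_cons, List.prod_nil, mul_one]
    rw [pow_mod_orderOf]; exact hk

open Subgroup in
lemma hasGroupBasis_of_isComplement' {G : Type*} [Group G] {H K : Subgroup G}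
    (hc : H.IsComplement' K) (hH : HasGroupBasis H) (hK : HasGroupBasis K) :
    HasGroupBasis G := by
  obtain ⟨n₁, b₁, hb₁, hbij₁⟩ := hH
  obtain ⟨n₂, b₂, hb₂, hbij₂⟩ := hK
  set b : Fin (n₁ + n₂) → G := Fin.append (fun i => (b₁ i : G)) (fun i => (b₂ i : G)) with hbdef
  have hbl : ∀ i, b (Fin.castAdd n₂ i) = (b₁ i : G) := fun i => Fin.append_left _ _ i
  have hbr : ∀ i, b (Fin.natAdd n₁ i) = (b₂ i : G) := fun i => Fin.append_right _ _ i
  have hol : ∀ i, orderOf (b (Fin.castAdd n₂ i)) = orderOf (b₁ i) := fun i => by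
    rw [hbl, Subgroup.orderOf_coe]
  have hor : ∀ i, orderOf (b (Fin.natAdd n₁ i)) = orderOf (b₂ i) := fun i => by
    rw [hbr, Subgroup.orderOf_coe]
  refine ⟨n₁ + n₂, b, ?_, ?_⟩
  · intro i
    refine Fin.addCases (fun i => ?_) (fun j => ?_) i
    · rw [hbl]
      simpa using hb₁ i
    · rw [hbr]
      simpa using hb₂ j
  · -- the equivalence on exponent tuples
    let φ : (∀ i, Fin (orderOf (b i))) →
        (∀ i, Fin (orderOf (b₁ i))) × (∀ j, Fin (orderOf (b₂ j))) :=
      fun a => (fun i => Fin.cast (hol i) (a (Fin.castAdd n₂ i)),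
                fun j => Fin.cast (hor j) (a (Fin.natAdd n₁ j)))
    let ψ : ((∀ i, Fin (orderOf (b₁ i))) × (∀ j, Fin (orderOf (b₂ j)))) →
        (∀ i, Fin (orderOf (b i))) :=
      fun p => Fin.addCases (motive := fun i => Fin (orderOf (b i)))
        (fun i => Fin.cast (hol i).symm (p.1 i)) (fun j => Fin.cast (hor j).symm (p.2 j))
    have hψφ : Function.LeftInverse ψ φ := by
      intro a
      funext i
      refine Fin.addCases (motive := fun i => ψ (φ a) i = a i) (fun i => ?_) (fun j => ?_) i
      · simp [ψ, φ, Fin.addCases_left]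
      · simp [ψ, φ, Fin.addCases_right]
    have hφψ : Function.RightInverse ψ φ := by
      intro p
      refine Prod.ext ?_ ?_
      · funext i
        apply Fin.ext
        simp [ψ, φ, Fin.addCases_left]
      · funext j
        apply Fin.ext
        simp [ψ, φ, Fin.addCases_right]
    have hφ : Function.Bijective φ := (Equiv.mk φ ψ hψφ hφψ).bijective
    have key : (fun a : ∀ i, Fin (orderOf (b i)) => (List.ofFn fun i => b i ^ ((a i : ℕ))).prod)
        = (fun x : ↥(H : Set G) × ↥(K : Set G) => x.1.1 * x.2.1) ∘
          (Prod.map (fun a : ∀ i, Fin (orderOf (b₁ i)) =>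
              (List.ofFn fun i => b₁ i ^ ((a i : ℕ))).prod)
            (fun a : ∀ j, Fin (orderOf (b₂ j)) =>
              (List.ofFn fun j => b₂ j ^ ((a j : ℕ))).prod)) ∘ φ := by
      funext a
      simp only [Function.comp_apply, Prod.map]
      rw [List.ofFn_add, List.prod_append]
      congr 1
      · rw [SubmonoidClass.coe_list_prod, List.map_ofFn]
        refine congrArg List.prod (congrArg List.ofFn ?_)
        funext i
        simp [φ, hbl i]
        show b (Fin.castAdd n₂ i) ^ ((a (Fin.castAdd n₂ i) : ℕ)) = ↑(b₁ i) ^ ((a (Fin.castAdd n₂ i) : ℕ))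
        exact congrArg (· ^ ((a (Fin.castAdd n₂ i) : ℕ))) (hbl i)
      · rw [SubmonoidClass.coe_list_prod, List.map_ofFn]
        refine congrArg List.prod (congrArg List.ofFn ?_)
        funext j
        simp [φ, hbr j]
    rw [key]
    exact hc.comp ((hbij₁.prodMap hbij₂).comp hφ)

open Subgroup

lemma hasGroupBasis_of_card_eq_prime_sq {G : Type*} [Group G] [Finite G] {p : ℕ}
    (hp : p.Prime) (h : Nat.card G = p ^ 2) : HasGroupBasis G := by
  have hfact : Fact p.Prime := ⟨hp⟩
  by_cases hcyc : IsCyclic G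
  · exact hasGroupBasis_of_isCyclic G hcyc
  have hnt : Nontrivial G := by
    rw [← Finite.one_lt_card_iff_nontrivial, h]
    nlinarith [hp.two_le]
  obtain ⟨x, hx⟩ := exists_ne (1 : G)
  have horder : ∀ z : G, z ≠ 1 → orderOf z = p := by
    intro z hz
    have hdvd : orderOf z ∣ p ^ 2 := h ▸ orderOf_dvd_natCard z
    rcases (Nat.dvd_prime_pow hp).mp hdvd with ⟨k, hk, hek⟩
    interval_cases k
    · simp only [pow_zero] at hek
      exact absurd (orderOf_eq_one_iff.mp hek) hz
    · simpa using hek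
    · exact absurd (isCyclic_of_orderOf_eq_card z (by rw [hek, h])) hcyc
  set Hx := Subgroup.zpowers x with hHx
  have hcardHx : Nat.card Hx = p := by rw [hHx, Nat.card_zpowers, horder x hx]
  have hex : ∃ y : G, y ∉ Hx := by
    by_contra hy
    push_neg at hy
    have htop : Hx = ⊤ := Subgroup.eq_top_iff' _ |>.mpr hy
    rw [htop, Subgroup.card_top, h] at hcardHx
    nlinarith [hp.two_le]
  obtain ⟨y, hy⟩ := hex
  have hy1 : y ≠ 1 := fun h' => hy (h' ▸ Subgroup.one_mem Hx)
  set Ky := Subgroup.zpowers y with hKy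
  have hcardKy : Nat.card Ky = p := by rw [hKy, Nat.card_zpowers, horder y hy1]
  have hdisj : Disjoint Hx Ky := by
    rw [disjoint_iff]
    rcases hp.eq_one_or_self_of_dvd _ (Subgroup.card_dvd_of_le (inf_le_right (a := Hx) (b := Ky)) |>.trans hcardKy.dvd) with h1 | h1
    · exact Subgroup.card_eq_one.mp h1
    · exfalso
      have heq : Hx ⊓ Ky = Ky := by
        apply Subgroup.eq_of_le_of_card_ge inf_le_right
        rw [hcardKy, h1]
      have hyk : y ∈ Hx ⊓ Ky := by rw [heq]; exact Subgroup.mem_zpowers y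
      exact hy hyk.1
  have hcomp : Hx.IsComplement' Ky :=
    Subgroup.isComplement'_of_card_mul_and_disjoint (by rw [hcardHx, hcardKy, h, sq]) hdisj
  exact hasGroupBasis_of_isComplement' hcomp
    (hasGroupBasis_of_isCyclic _ (isCyclic_of_prime_card hcardHx))
    (hasGroupBasis_of_isCyclic _ (isCyclic_of_prime_card hcardKy))

lemma aux_normalizer_le_centralizer {G : Type*} [Group G] [Finite G] {p : ℕ} [hfp : Fact p.Prime]
    (hodd : Odd (Nat.card G)) (hcf : ∀ q : ℕ, q.Prime → ¬ q ^ 3 ∣ Nat.card G)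
    (hmin : ∀ q : ℕ, q.Prime → q ∣ Nat.card G → p ≤ q) (hpm : p ∣ Nat.card G)
    (P : Sylow p G) :
    Subgroup.normalizer ((P : Subgroup G) : Set G) ≤ Subgroup.centralizer ((P : Subgroup G) : Set G) := by
  set m := Nat.card G with hm
  have hp := hfp.out
  have hm0 : m ≠ 0 := Nat.card_pos.ne'
  set H : Subgroup G := (P : Subgroup G) with hHdef
  set a := m.factorization p with ha
  have hcardH : Nat.card H = p ^ a := Sylow.card_eq_multiplicity P
  have ha1 : 1 ≤ a := (Nat.Prime.factorization_pos_of_dvd hp hm0 hpm)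
  have hpam : p ^ a ∣ m := Nat.ordProj_dvd m p
  have ha2 : a ≤ 2 := by
    by_contra hgt
    exact hcf p hp (dvd_trans (pow_dvd_pow p (by omega)) hpam)
  -- p is odd
  have hpodd : Odd p := by
    rcases hp.eq_two_or_odd' with h2 | hoddp
    · exfalso
      rw [h2] at hpm
      rw [Nat.odd_iff] at hodd
      omega
    · exact hoddp
  -- H is commutative
  have hcomm : ∀ u v : H, u * v = v * u := by
    rcases (by omega : a = 1 ∨ a = 2) with h1 | h2
    · have : Nat.card H = p := by rw [hcardH, h1, pow_one]
      haveI hc : IsCyclic H := isCyclic_of_prime_card this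
      letI : CommGroup H := IsCyclic.commGroup
      exact fun u v => mul_comm u v
    · exact IsPGroup.commutative_of_card_eq_prime_sq (by rw [hcardH, h2])
  have hPC : H ≤ Subgroup.centralizer (H : Set G) := by
    intro n hn
    rw [Subgroup.mem_centralizer_iff]
    intro g hg
    have := hcomm ⟨g, hg⟩ ⟨n, hn⟩
    exact Subtype.ext_iff.mp this
  set φ := Subgroup.normalizerMonoidHom H with hφ
  -- main claim : φ is trivial
  have key : ∀ n : (normalizer (H : Set G)), φ n = 1 := by
    by_contra hk
    push_neg at hk
    obtain ⟨n₀, hn₀⟩ := hk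
    set R := φ.range with hR
    have hRne : Nat.card R ≠ 1 := by
      intro h1
      have hbot : R = ⊥ := Subgroup.card_eq_one.mp h1
      have hmem : φ n₀ ∈ R := ⟨n₀, rfl⟩
      rw [hbot, Subgroup.mem_bot] at hmem
      exact hn₀ hmem
    set q := (Nat.card R).minFac with hqdef
    have hq : q.Prime := Nat.minFac_prime hRne
    haveI := Fact.mk hq
    have hqR : q ∣ Nat.card R := Nat.minFac_dvd _
    -- card identities
    have hiso : Nat.card ((normalizer (H : Set G)) ⧸ φ.ker) = Nat.card R :=
      Nat.card_congr (QuotientGroup.quotientKerEquivRange φ).toEquiv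
    have hNcard : Nat.card (normalizer (H : Set G)) = Nat.card R * Nat.card φ.ker := by
      rw [← hiso]
      exact Subgroup.card_eq_card_quotient_mul_card_subgroup φ.ker
    have hNdvd : Nat.card (normalizer (H : Set G)) ∣ m := Subgroup.card_subgroup_dvd_card _
    have hRdvdm : Nat.card R ∣ m := dvd_trans ⟨Nat.card φ.ker, hNcard⟩ hNdvd
    -- p ∤ card R
    have hkerdvd : p ^ a ∣ Nat.card φ.ker := by
      have hle : H.subgroupOf (normalizer (H : Set G)) ≤ φ.ker := by
        rw [hφ, Subgroup.normalizerMonoidHom_ker]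
        intro x hx
        rw [Subgroup.mem_subgroupOf] at hx ⊢
        exact hPC hx
      have hcardeq : Nat.card (H.subgroupOf (normalizer (H : Set G))) = p ^ a := by
        rw [← hcardH]
        exact Nat.card_congr (Subgroup.subgroupOfEquivOfLe Subgroup.le_normalizer).toEquiv
      exact hcardeq ▸ Subgroup.card_dvd_of_le hle
    have hpR : ¬ p ∣ Nat.card R := by
      intro hpd
      have : p ^ (a + 1) ∣ m := by
        calc p ^ (a + 1) = p ^ a * p := by ring
        _ ∣ Nat.card φ.ker * Nat.card R := mul_dvd_mul hkerdvd hpd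
        _ = Nat.card (normalizer (H : Set G)) := by rw [hNcard, mul_comm]
        _ ∣ m := hNdvd
      exact Nat.pow_succ_factorization_not_dvd hm0 hp this
    have hqm : q ∣ m := hqR.trans hRdvdm
    have hqp : p < q := by
      have hge : p ≤ q := hmin q hq hqm
      rcases lt_or_eq_of_le hge with h | h
      · exact h
      · exact absurd (h ▸ hqR) hpR
    have hqodd : Odd q := by
      rcases hq.eq_two_or_odd' with h2 | h
      · exfalso
        rw [h2] at hqm
        rw [Nat.odd_iff] at hodd
        omega
      · exact h
    -- get automorphism of order q
    obtain ⟨σ', hσ'⟩ := exists_prime_orderOf_dvd_card' (G := R) q hqR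
    set σ : MulAut H := (σ' : MulAut H) with hσdef
    have hσq : orderOf σ = q := by rw [hσdef, Subgroup.orderOf_coe, hσ']
    have hσne : σ ≠ 1 := by
      intro h1
      rw [h1, orderOf_one] at hσq
      have := hq.two_le
      omega
    -- fixed point subgroup
    set Sσ := Subgroup.zpowers σ with hSσ
    have hSσcard : Nat.card Sσ = q := by rw [hSσ, Nat.card_zpowers, hσq]
    have hpgrp : IsPGroup q Sσ := IsPGroup.of_card (by rw [hSσcard, pow_one])
    have hfixiff : ∀ x : H, x ∈ MulAction.fixedPoints Sσ H ↔ σ x = x := by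
      intro x
      constructor
      · intro hx
        have := hx ⟨σ, Subgroup.mem_zpowers σ⟩
        simpa [MulAut.smul_def] using this
      · intro hx g
        have hmem : (g : MulAut H) ∈ MulAction.stabilizer (MulAut H) x := by
          have : Sσ ≤ MulAction.stabilizer (MulAut H) x := by
            rw [hSσ, Subgroup.zpowers_le]
            simpa [MulAction.mem_stabilizer_iff, MulAut.smul_def] using hx
          exact this g.2
        exact hmem
    set S : Subgroup H :=
      { carrier := MulAction.fixedPoints Sσ H
        one_mem' := (hfixiff 1).mpr (map_one σ)
        mul_mem' := fun {x y} hx hy => (hfixiff _).mpr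
          (by rw [map_mul, (hfixiff x).mp hx, (hfixiff y).mp hy])
        inv_mem' := fun {x} hx => (hfixiff _).mpr
          (by rw [map_inv, (hfixiff x).mp hx]) } with hSdef
    have hmod : Nat.card H ≡ Nat.card S [MOD q] :=
      IsPGroup.card_modEq_card_fixedPoints hpgrp H
    have hSdvd : Nat.card S ∣ p ^ a := hcardH ▸ Subgroup.card_subgroup_dvd_card S
    obtain ⟨k, hk, hScard⟩ := (Nat.dvd_prime_pow hp).mp hSdvd
    have hSneTop : S ≠ ⊤ := by
      intro htop
      apply hσne
      apply MulEquiv.ext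
      intro x
      have hx : x ∈ S := by rw [htop]; exact Subgroup.mem_top x
      exact (hfixiff x).mp hx
    have hka : k < a := by
      rcases lt_or_eq_of_le hk with h | h
      · exact h
      · exfalso
        have hcc : Nat.card S = Nat.card H := by rw [hScard, hcardH, h]
        exact hSneTop ((Subgroup.card_eq_iff_eq_top S).mp hcc)
    -- q ∣ p ^ a - p ^ k
    have hle' : p ^ k ≤ p ^ a := Nat.pow_le_pow_right hp.pos hk
    have hdvd_sub : q ∣ p ^ a - p ^ k := by
      have := (Nat.modEq_iff_dvd' hle').mp (by rw [← hScard, ← hcardH]; exact hmod.symm)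
      exact this
    have hfactor : p ^ a - p ^ k = p ^ k * (p ^ (a - k) - 1) := by
      have hexp : k + (a - k) = a := by omega
      rw [Nat.mul_sub, mul_one, ← pow_add, hexp]
    have hqnotp : ¬ q ∣ p ^ k := by
      intro hd
      have := (Nat.Prime.dvd_of_dvd_pow hq hd)
      have : q = p := (Nat.prime_dvd_prime_iff_eq hq hp).mp this
      omega
    have hqsub1 : q ∣ p ^ (a - k) - 1 := by
      rw [hfactor] at hdvd_sub
      exact (Nat.Coprime.dvd_of_dvd_mul_left
        ((Nat.Prime.coprime_iff_not_dvd hq).mpr hqnotp) hdvd_sub)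
    -- final arithmetic
    have hd12 : a - k = 1 ∨ a - k = 2 := by omega
    have hple : 3 ≤ p := by
      rcases Nat.odd_iff.mp hpodd with h
      have := hp.two_le
      omega
    rcases hd12 with hd | hd
    · rw [hd, pow_one] at hqsub1
      have : q ≤ p - 1 := Nat.le_of_dvd (by omega) hqsub1
      omega
    · rw [hd] at hqsub1
      have hsq : p ^ 2 - 1 = (p - 1) * (p + 1) := by
        obtain ⟨t, rfl⟩ : ∃ t, p = t + 1 := ⟨p - 1, by omega⟩
        have h1 : (t + 1) ^ 2 = t * (t + 2) + 1 := by ring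
        have h2 : t + 1 - 1 = t := by omega
        have h3 : t + 1 + 1 = t + 2 := by omega
        rw [h1, h2, h3]
        omega
      rw [hsq] at hqsub1
      rcases (Nat.Prime.dvd_mul hq).mp hqsub1 with h | h
      · have : q ≤ p - 1 := Nat.le_of_dvd (by omega) h
        omega
      · have hle : q ≤ p + 1 := Nat.le_of_dvd (by omega) h
        have : q = p + 1 := by omega
        rcases Nat.odd_iff.mp hqodd with hq1
        rcases Nat.odd_iff.mp hpodd with hp1
        omega
  -- conclude
  intro g hg
  have h1 : φ ⟨g, hg⟩ = 1 := key ⟨g, hg⟩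
  have h2 : (⟨g, hg⟩ : (normalizer (H : Set G))) ∈ φ.ker := h1
  rw [hφ, Subgroup.normalizerMonoidHom_ker, Subgroup.mem_subgroupOf] at h2
  exact h2

theorem main_aux : ∀ (m : ℕ) (G : Type*) [Group G] [Finite G],
    Odd m → (∀ p : ℕ, p.Prime → ¬ p ^ 3 ∣ m) → Nat.card G = m → HasGroupBasis G := by
  intro m
  induction m using Nat.strong_induction_on with
  | _ m ih =>
    intro G _ _ hodd hcf hcard
    rcases eq_or_ne m 1 with h1 | h1
    · haveI : Subsingleton G := Finite.card_le_one_iff_subsingleton.mp (by rw [hcard, h1])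
      exact hasGroupBasis_of_subsingleton G
    set p := m.minFac with hpdef
    have hp : p.Prime := Nat.minFac_prime h1
    haveI := Fact.mk hp
    have hpm : p ∣ m := Nat.minFac_dvd m
    have hm0 : m ≠ 0 := by rintro rfl; exact (by simpa using hodd : False)
    obtain ⟨P⟩ : Nonempty (Sylow p G) := Sylow.nonempty
    have hodd' : Odd (Nat.card G) := hcard ▸ hodd
    have hcf' : ∀ q : ℕ, q.Prime → ¬ q ^ 3 ∣ Nat.card G := by rw [hcard]; exact hcf
    have hmin' : ∀ q : ℕ, q.Prime → q ∣ Nat.card G → p ≤ q := by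
      intro q hq hdvd
      rw [hcard] at hdvd
      exact Nat.minFac_le_of_dvd hq.two_le hdvd
    have hpm' : p ∣ Nat.card G := hcard ▸ hpm
    have hP := aux_normalizer_le_centralizer hodd' hcf' hmin' hpm' P
    have hcomp := MonoidHom.ker_transferSylow_isComplement' P hP
    set K := (MonoidHom.transferSylow P hP).ker with hK
    -- cardinalities
    set a := m.factorization p with ha
    have hcardP : Nat.card P = p ^ a := by rw [Sylow.card_eq_multiplicity, hcard]
    have ha1 : 1 ≤ a := Nat.Prime.factorization_pos_of_dvd hp hm0 hpm
    have ha2 : a ≤ 2 := by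
      by_contra hgt
      exact hcf p hp (dvd_trans (pow_dvd_pow p (by omega)) (hcard ▸ (hcardP ▸ Subgroup.card_subgroup_dvd_card (P : Subgroup G))))
    have hmul : Nat.card K * Nat.card P = m := by rw [hcomp.card_mul, hcard]
    have hpa1 : 1 < p ^ a := Nat.one_lt_pow (by omega) hp.one_lt
    have hKlt : Nat.card K < m := by
      rw [← hmul, hcardP]
      have hK0 : 0 < Nat.card K := Nat.card_pos
      calc Nat.card K = Nat.card K * 1 := (mul_one _).symm
      _ < Nat.card K * p ^ a := (Nat.mul_lt_mul_left hK0).mpr hpa1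
    have hKdvd : Nat.card K ∣ m := ⟨Nat.card P, hmul.symm⟩
    have hKodd : Odd (Nat.card K) := by
      rcases Nat.even_or_odd (Nat.card K) with he | ho
      · exfalso
        have h2 : 2 ∣ m := dvd_trans he.two_dvd hKdvd
        rw [Nat.odd_iff] at hodd
        omega
      · exact ho
    have hKcf : ∀ q : ℕ, q.Prime → ¬ q ^ 3 ∣ Nat.card K :=
      fun q hq hd => hcf q hq (hd.trans hKdvd)
    have basisK : HasGroupBasis K := ih (Nat.card K) hKlt K hKodd hKcf rfl
    have basisP : HasGroupBasis (P : Subgroup G) := by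
      rcases (by omega : a = 1 ∨ a = 2) with h | h
      · exact hasGroupBasis_of_isCyclic _ (isCyclic_of_prime_card (p := p)
          (by rw [hcardP, h, pow_one]))
      · exact hasGroupBasis_of_card_eq_prime_sq hp (by rw [hcardP, h])
    exact hasGroupBasis_of_isComplement' hcomp basisK basisP

/-- If `m` is an odd cube-free positive integer and `G` is a finite group of order `m`,
then `G` has a basis. -/
theorem hasGroupBasis_of_card_odd_cubeFree {G : Type*} [Group G] [Finite G]
    (m : ℕ) (hm : 0 < m) (hodd : Odd m) (hcf : ∀ p : ℕ, p.Prime → ¬ p ^ 3 ∣ m)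
    (hcard : Nat.card G = m) :
    HasGroupBasis G := by
  exact main_aux m G hodd hcf hcard
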